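/- arXiv:2511.10462 — 4 statements merged into one kernel-verified Lean document; each statement's English description precedes it below -/
import Mathlib

section
/- For all integers i, j, k, l one has δ(j,k,l) + δ(i,j,l) = δ(i,j,k) + δ(i,k,l). (This identity is exactly what makes the KLRW/Coulomb-branch multiplication rule μ²(a_{k,j}s^β, a_{j,i}s^α) = a_{k,i}s^{β+α+δ(i,j,k)} associative.) -/
/-- The dot-count correction `δ(i,j,k)` in the KLRW/Coulomb-branch algebra:
`δ(i,j,k) = 0` if `(i−j)·(j−k) ≥ 0`, and `min(|i−j|, |j−k|)` otherwise. -/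
def dlt (i j k : ℤ) : ℕ :=
  if 0 ≤ (i - j) * (j - k) then 0 else min (i - j).natAbs (j - k).natAbs

lemma dlt_eq (i j k : ℤ) :
    dlt i j k = if (j ≤ i ∧ k ≤ j) ∨ (i ≤ j ∧ j ≤ k) then 0
      else min (i - j).natAbs (j - k).natAbs := by
  unfold dlt
  congr 1
  simp only [eq_iff_iff]
  constructor
  · intro h
    rcases mul_nonneg_iff.mp h with ⟨h1, h2⟩ | ⟨h1, h2⟩ <;> omega
  · intro h
    rcases h with ⟨h1, h2⟩ | ⟨h1, h2⟩
    · exact mul_nonneg (by omega) (by omega)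
    · exact mul_nonneg_iff.mpr (Or.inr ⟨by omega, by omega⟩)

set_option maxHeartbeats 1000000 in
/-- For all integers `i, j, k, l` one has `δ(j,k,l) + δ(i,j,l) = δ(i,j,k) + δ(i,k,l)`;
this is exactly the identity making the KLRW multiplication
`μ²(a_{k,j}s^β, a_{j,i}s^α) = a_{k,i}s^{β+α+δ(i,j,k)}` associative. -/
theorem dlt_cocycle : ∀ i j k l : ℤ, dlt j k l + dlt i j l = dlt i j k + dlt i k l := by
  intro i j k l
  simp only [dlt_eq]
  split_ifs <;> omega
end

section
/- The k-bilinear multiplication on A determined on basis elements by (a_{k,j'}s^β)·(a_{j,i}s^α) = a_{k,i}s^{β+α+δ(i,j,k)} if j' = j and 0 otherwise is associative, and the element 1 := Σ_{i=0}^n e_i is a two-sided unit; hence A is an associative unital k-algebra (the KLRW algebra of the Fukaya category of the Coulomb branch M(•,1) with n punctures). -/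
namespace KLRW

/-- Index of a basis element `a_{j,i}s^α`: `(j, i, α)` (target, source, number of dots). -/
abbrev B (n : ℕ) := Fin (n + 1) × Fin (n + 1) × ℕ

/-- The underlying free `k`-module of the KLRW algebra of the Fukaya category of the
Coulomb branch `M(•,1)` with `n` punctures: the free module on the symbols `a_{j,i}s^α`. -/
abbrev A (n : ℕ) (k : Type*) [Field k] := B n →₀ k

variable (n : ℕ) (k : Type*) [Field k]

/-- `δ(i,j,l)` evaluated on vertex indices. -/
def dd (i j l : Fin (n + 1)) : ℕ := dlt ((i : ℕ) : ℤ) ((j : ℕ) : ℤ) ((l : ℕ) : ℤ)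

/-- The basis element `a_{j,i}s^α`. -/
noncomputable def bas (j i : Fin (n + 1)) (α : ℕ) : A n k := Finsupp.single (j, i, α) 1

/-- Product of two basis elements:
`(a_{k,j'}s^β)·(a_{j,i}s^α) = a_{k,i}s^{β+α+δ(i,j,k)}` if `j' = j`, and `0` otherwise. -/
noncomputable def mulB (x y : B n) : A n k :=
  if x.2.1 = y.1 then
    Finsupp.single (x.1, y.2.1, x.2.2 + y.2.2 + dd n y.2.1 y.1 x.1) 1
  else 0

/-- The `k`-bilinear multiplication on `A` determined by `mulB` on basis elements. -/
noncomputable def mul (x y : A n k) : A n k :=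
  x.sum fun xb c => y.sum fun yb d => (c * d) • mulB n k xb yb

/-- The element `1 = Σ_{i=0}^n e_i` where `e_i = a_{i,i}s^0`. -/
noncomputable def one : A n k := Finset.univ.sum fun i : Fin (n + 1) => bas n k i i 0

end KLRW

section Aux

lemma two_dlt (i j k : ℤ) : 2 * (dlt i j k : ℤ) =
    ((i-j).natAbs + (j-k).natAbs - (i-k).natAbs : ℤ) := by
  unfold dlt
  by_cases h : 0 ≤ (i - j) * (j - k)
  · rcases mul_nonneg_iff.mp h with ⟨h1, h2⟩ | ⟨h1, h2⟩ <;> simp only [h, if_true] <;> omega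
  · rcases mul_neg_iff.mp (lt_of_not_ge h) with ⟨h1, h2⟩ | ⟨h1, h2⟩ <;>
      simp only [h, if_false] <;> omega

lemma dlt_key (i j k l : ℤ) : dlt j k l + dlt i j l = dlt i j k + dlt i k l := by
  have h1 := two_dlt j k l
  have h2 := two_dlt i j l
  have h3 := two_dlt i j k
  have h4 := two_dlt i k l
  omega

lemma dlt_right (a b : ℤ) : dlt a b b = 0 := by simp [dlt]
lemma dlt_left (a c : ℤ) : dlt a a c = 0 := by simp [dlt]

variable (n : ℕ) (k : Type*) [Field k]

lemma klrw_mul_single_single (a b : KLRW.B n) (c d : k) :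
    KLRW.mul n k (Finsupp.single a c) (Finsupp.single b d) = (c * d) • KLRW.mulB n k a b := by
  unfold KLRW.mul
  rw [Finsupp.sum_single_index (by simp), Finsupp.sum_single_index (by simp)]

lemma klrw_zero_mul (y : KLRW.A n k) : KLRW.mul n k 0 y = 0 :=
  Finsupp.sum_zero_index

lemma klrw_mul_zero (x : KLRW.A n k) : KLRW.mul n k x 0 = 0 := by
  unfold KLRW.mul
  simp [Finsupp.sum_zero_index]

lemma klrw_add_mul (x x' y : KLRW.A n k) :
    KLRW.mul n k (x + x') y = KLRW.mul n k x y + KLRW.mul n k x' y := by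
  unfold KLRW.mul
  rw [Finsupp.sum_add_index']
  · intro a; simp
  · intro a b1 b2
    rw [← Finsupp.sum_add]
    refine Finsupp.sum_congr fun yb _ => ?_
    rw [add_mul, add_smul]

lemma klrw_mul_add (x y y' : KLRW.A n k) :
    KLRW.mul n k x (y + y') = KLRW.mul n k x y + KLRW.mul n k x y' := by
  unfold KLRW.mul
  rw [← Finsupp.sum_add]
  refine Finsupp.sum_congr fun xb _ => ?_
  rw [Finsupp.sum_add_index']
  · intro a; simp
  · intro a b1 b2; rw [mul_add, add_smul]

lemma klrw_assoc_single (a b e : KLRW.B n) (c d f : k) :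
    KLRW.mul n k (KLRW.mul n k (Finsupp.single a c) (Finsupp.single b d)) (Finsupp.single e f)
      = KLRW.mul n k (Finsupp.single a c)
          (KLRW.mul n k (Finsupp.single b d) (Finsupp.single e f)) := by
  obtain ⟨a1, a2, a3⟩ := a
  obtain ⟨b1, b2, b3⟩ := b
  obtain ⟨e1, e2, e3⟩ := e
  rw [klrw_mul_single_single, klrw_mul_single_single]
  by_cases h1 : a2 = b1
  · by_cases h2 : b2 = e1
    · subst h1; subst h2
      simp only [KLRW.mulB, if_true, Finsupp.smul_single, smul_eq_mul, mul_one, if_pos rfl]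
      rw [klrw_mul_single_single, klrw_mul_single_single]
      simp only [KLRW.mulB, if_pos rfl, eq_self_iff_true, if_true, ite_true]
      have key : KLRW.dd n b2 a2 a1 + KLRW.dd n e2 b2 a1
          = KLRW.dd n e2 b2 a2 + KLRW.dd n e2 a2 a1 := dlt_key _ _ _ _
      rw [mul_assoc]
      congr 1
      congr 1
      simp only [Prod.mk.injEq, true_and]
      omega
    · subst h1
      simp only [KLRW.mulB, if_pos rfl, if_neg h2, eq_self_iff_true, if_true, ite_true,
        smul_zero, Finsupp.smul_single, smul_eq_mul, mul_one]
      rw [klrw_mul_single_single, klrw_mul_zero]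
      simp only [KLRW.mulB, if_neg h2, smul_zero]
  · by_cases h2 : b2 = e1
    · subst h2
      simp only [KLRW.mulB, if_neg h1, if_pos rfl, eq_self_iff_true, if_true, ite_true,
        smul_zero, Finsupp.smul_single, smul_eq_mul, mul_one]
      rw [klrw_zero_mul, klrw_mul_single_single]
      simp only [KLRW.mulB, if_neg h1, smul_zero]
    · simp only [KLRW.mulB, if_neg h1, if_neg h2, smul_zero]
      rw [klrw_zero_mul, klrw_mul_zero]

lemma klrw_assoc3 (a b : KLRW.B n) (c d : k) (z : KLRW.A n k) :
    KLRW.mul n k (KLRW.mul n k (Finsupp.single a c) (Finsupp.single b d)) z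
      = KLRW.mul n k (Finsupp.single a c) (KLRW.mul n k (Finsupp.single b d) z) := by
  induction z using Finsupp.induction with
  | zero => rw [klrw_mul_zero, klrw_mul_zero, klrw_mul_zero]
  | single_add e f z' _ _ ih =>
    rw [klrw_mul_add, klrw_mul_add, klrw_mul_add, ih, klrw_assoc_single]

lemma klrw_assoc2 (a : KLRW.B n) (c : k) (y z : KLRW.A n k) :
    KLRW.mul n k (KLRW.mul n k (Finsupp.single a c) y) z
      = KLRW.mul n k (Finsupp.single a c) (KLRW.mul n k y z) := by
  induction y using Finsupp.induction with
  | zero => rw [klrw_mul_zero, klrw_zero_mul, klrw_mul_zero]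
  | single_add b d y' _ _ ih =>
    rw [klrw_mul_add, klrw_add_mul, klrw_add_mul, ih, klrw_assoc3, ← klrw_mul_add]

lemma klrw_assoc (x y z : KLRW.A n k) :
    KLRW.mul n k (KLRW.mul n k x y) z = KLRW.mul n k x (KLRW.mul n k y z) := by
  induction x using Finsupp.induction with
  | zero => rw [klrw_zero_mul, klrw_zero_mul, klrw_zero_mul]
  | single_add a c x' _ _ ih =>
    rw [klrw_add_mul, klrw_add_mul, klrw_add_mul, ih, klrw_assoc2]

lemma klrw_sum_mul {ι : Type*} (s : Finset ι) (f : ι → KLRW.A n k) (y : KLRW.A n k) :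
    KLRW.mul n k (∑ i ∈ s, f i) y = ∑ i ∈ s, KLRW.mul n k (f i) y := by
  classical
  induction s using Finset.induction_on with
  | empty => simp [klrw_zero_mul]
  | insert _ _ h ih => rw [Finset.sum_insert h, Finset.sum_insert h, klrw_add_mul, ih]

lemma klrw_mul_sum {ι : Type*} (s : Finset ι) (f : ι → KLRW.A n k) (x : KLRW.A n k) :
    KLRW.mul n k x (∑ i ∈ s, f i) = ∑ i ∈ s, KLRW.mul n k x (f i) := by
  classical
  induction s using Finset.induction_on with
  | empty => simp [klrw_mul_zero]
  | insert _ _ h ih => rw [Finset.sum_insert h, Finset.sum_insert h, klrw_mul_add, ih]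

lemma klrw_one_mul_single (b : KLRW.B n) (c : k) :
    KLRW.mul n k (KLRW.one n k) (Finsupp.single b c) = Finsupp.single b c := by
  unfold KLRW.one KLRW.bas
  rw [klrw_sum_mul]
  rw [Finset.sum_eq_single b.1]
  · rw [klrw_mul_single_single]
    have hd : KLRW.dd n b.2.1 b.1 b.1 = 0 := dlt_right _ _
    simp [KLRW.mulB, hd]
  · intro i _ hi
    rw [klrw_mul_single_single]
    simp [KLRW.mulB, hi]
  · intro h; exact absurd (Finset.mem_univ _) h

lemma klrw_single_mul_one (b : KLRW.B n) (c : k) :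
    KLRW.mul n k (Finsupp.single b c) (KLRW.one n k) = Finsupp.single b c := by
  unfold KLRW.one KLRW.bas
  rw [klrw_mul_sum]
  rw [Finset.sum_eq_single b.2.1]
  · rw [klrw_mul_single_single]
    have hd : KLRW.dd n b.2.1 b.2.1 b.1 = 0 := dlt_left _ _
    simp [KLRW.mulB, hd]
  · intro i _ hi
    rw [klrw_mul_single_single]
    simp [KLRW.mulB, Ne.symm hi]
  · intro h; exact absurd (Finset.mem_univ _) h

end Aux

/-- The `k`-bilinear multiplication on the KLRW algebra determined on basis elements by
`(a_{k,j'}s^β)·(a_{j,i}s^α) = a_{k,i}s^{β+α+δ(i,j,k)}` if `j' = j` (and `0` otherwise)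
is associative, and `1 := Σ_{i=0}^n e_i` is a two-sided unit; hence `A` is an
associative unital `k`-algebra. -/
theorem klrw_assoc_unital (n : ℕ) (hn : 1 ≤ n) (k : Type*) [Field k] :
    (∀ x y z : KLRW.A n k,
        KLRW.mul n k (KLRW.mul n k x y) z = KLRW.mul n k x (KLRW.mul n k y z)) ∧
    (∀ x : KLRW.A n k,
        KLRW.mul n k (KLRW.one n k) x = x ∧ KLRW.mul n k x (KLRW.one n k) = x) := by
  refine ⟨klrw_assoc n k, fun x => ?_⟩
  constructor
  · induction x using Finsupp.induction with
    | zero => exact klrw_mul_zero n k _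
    | single_add b c x' _ _ ih => rw [klrw_mul_add, ih, klrw_one_mul_single]
  · induction x using Finsupp.induction with
    | zero => exact klrw_zero_mul n k _
    | single_add b c x' _ _ ih => rw [klrw_add_mul, ih, klrw_single_mul_one]
end

section
/- For every m ≥ 3 one has ker d_m = range d_{m−1}. Consequently the Hochschild cohomology of the diagonal bimodule of the KLRW algebra vanishes in all degrees m ≥ 3: HH^m(Δ) = 0. -/
/-- The index set `S_0 = {e_i : 0 ≤ i ≤ n}`. -/
inductive S0 (n : ℕ) where
  | e (i : Fin (n + 1))

/-- The index set `S_1 = {s_i} ∪ {p_{i+1}} ∪ {q_i}` (here `p i` stands for `p_{i+1}`). -/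
inductive S1 (n : ℕ) where
  | s (i : Fin (n + 1))
  | p (i : Fin n)
  | q (i : Fin n)

/-- The index set `S_m` for `m ≥ 2`: the ambiguities `P^m_{i+1}, Q^m_i, sP^m_{i+1}, sQ^m_i`
(here `P i` stands for `P^m_{i+1}`, etc.). -/
inductive Shi (n : ℕ) where
  | P (i : Fin n)
  | Q (i : Fin n)
  | sP (i : Fin n)
  | sQ (i : Fin n)

/-- The Hochschild cochain spaces `C^m`: all functions `ℕ × S_m → k` (curried). -/
abbrev C (n : ℕ) (k : Type*) [Field k] : ℕ → Type _
  | 0 => ℕ → S0 n → k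
  | 1 => ℕ → S1 n → k
  | _ + 2 => ℕ → Shi n → k

/-- `(prev φ) ℓ w = φ_{ℓ−1}(w)` with the convention `φ_{−1} = 0`. -/
def prev {k σ : Type*} [Field k] (φ : ℕ → σ → k) : ℕ → σ → k
  | 0, _ => 0
  | ℓ + 1, w => φ ℓ w

variable (n : ℕ) (k : Type*) [Field k]

/-- The differential `d_0`. -/
def d0 (φ : C n k 0) : C n k 1 := fun ℓ w =>
  match w with
  | .s _ => 0
  | .p i => φ ℓ (.e i.succ) - φ ℓ (.e i.castSucc)
  | .q i => φ ℓ (.e i.castSucc) - φ ℓ (.e i.succ)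

/-- The differential `d_1`. -/
def d1 (φ : C n k 1) : C n k 2 := fun ℓ w =>
  match w with
  | .P i => prev φ ℓ (.p i) + prev φ ℓ (.q i) - φ ℓ (.s i.succ)
  | .Q i => prev φ ℓ (.q i) + prev φ ℓ (.p i) - φ ℓ (.s i.castSucc)
  | .sP i => φ ℓ (.s i.succ) - φ ℓ (.s i.castSucc)
  | .sQ i => φ ℓ (.s i.castSucc) - φ ℓ (.s i.succ)

/-- The differential `d_m` for even `m ≥ 2`. -/
def dE (φ : ℕ → Shi n → k) : ℕ → Shi n → k := fun ℓ w =>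
  match w with
  | .P i => φ ℓ (.P i) - φ ℓ (.Q i) + φ ℓ (.sP i)
  | .Q i => φ ℓ (.Q i) - φ ℓ (.P i) + φ ℓ (.sQ i)
  | .sP i => prev φ ℓ (.sP i) + prev φ ℓ (.sQ i)
  | .sQ i => prev φ ℓ (.sQ i) + prev φ ℓ (.sP i)

/-- The differential `d_m` for odd `m ≥ 3`. -/
def dO (φ : ℕ → Shi n → k) : ℕ → Shi n → k := fun ℓ w =>
  match w with
  | .P i => prev φ ℓ (.P i) + prev φ ℓ (.Q i) - φ ℓ (.sP i)
  | .Q i => prev φ ℓ (.Q i) + prev φ ℓ (.P i) - φ ℓ (.sQ i)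
  | .sP i => φ ℓ (.sP i) - φ ℓ (.sQ i)
  | .sQ i => φ ℓ (.sQ i) - φ ℓ (.sP i)

/-- The Hochschild differential `d_m : C^m → C^{m+1}` of the diagonal bimodule of the KLRW
algebra, computed from the Chouhy–Solotar resolution. -/
def d : (m : ℕ) → C n k m → C n k (m + 1)
  | 0 => d0 n k
  | 1 => d1 n k
  | m + 2 => if Even (m + 2) then dE n k else dO n k

lemma kerE_iff (φ : ℕ → Shi n → k) :
    dE n k φ = (fun _ _ => (0 : k)) ↔ ∃ ψ : ℕ → Shi n → k, dO n k ψ = φ := by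
  constructor
  · intro h
    have hP : ∀ ℓ i, φ ℓ (.P i) - φ ℓ (.Q i) + φ ℓ (.sP i) = 0 :=
      fun ℓ i => congrFun (congrFun h ℓ) (.P i)
    have hQ : ∀ ℓ i, φ ℓ (.Q i) - φ ℓ (.P i) + φ ℓ (.sQ i) = 0 :=
      fun ℓ i => congrFun (congrFun h ℓ) (.Q i)
    refine ⟨fun ℓ w => match w with
      | .P _ => 0 | .Q _ => 0
      | .sP i => -φ ℓ (.P i) | .sQ i => -φ ℓ (.Q i), ?_⟩
    funext ℓ w
    cases w with
    | P i => cases ℓ <;> simp [dO, prev]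
    | Q i => cases ℓ <;> simp [dO, prev]
    | sP i => simp only [dO]; linear_combination -hP ℓ i
    | sQ i => simp only [dO]; linear_combination -hQ ℓ i
  · rintro ⟨ψ, rfl⟩
    funext ℓ w
    cases w <;> cases ℓ <;> simp [dE, dO, prev] <;> ring

lemma kerO_iff (φ : ℕ → Shi n → k) :
    dO n k φ = (fun _ _ => (0 : k)) ↔ ∃ ψ : ℕ → Shi n → k, dE n k ψ = φ := by
  constructor
  · intro h
    have hP : ∀ ℓ i, prev φ ℓ (.P i) + prev φ ℓ (.Q i) - φ ℓ (.sP i) = 0 :=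
      fun ℓ i => congrFun (congrFun h ℓ) (.P i)
    have hsP : ∀ ℓ i, φ ℓ (.sP i) - φ ℓ (.sQ i) = 0 :=
      fun ℓ i => congrFun (congrFun h ℓ) (.sP i)
    refine ⟨fun ℓ w => match w with
      | .P i => φ ℓ (.P i) | .Q _ => 0
      | .sP _ => 0 | .sQ i => φ ℓ (.P i) + φ ℓ (.Q i), ?_⟩
    funext ℓ w
    cases w with
    | P i => simp [dE]
    | Q i =>
        have h1 := hP ℓ i
        have h2 := hP ℓ i
        simp only [dE]
        -- φ ℓ (.Q i) = 0 - φ ℓ (.P i) + (φ ℓ (.P i) + φ ℓ (.Q i))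
        ring_nf
    | sP i =>
        cases ℓ with
        | zero =>
            have h1 := hP 0 i
            simp only [prev] at h1
            simp [dE, prev]
            linear_combination h1
        | succ ℓ =>
            have h1 := hP (ℓ + 1) i
            simp only [prev] at h1
            simp [dE, prev]
            linear_combination h1
    | sQ i =>
        have h2 := hsP ℓ i
        cases ℓ with
        | zero =>
            have h1 := hP 0 i
            simp only [prev] at h1
            simp [dE, prev]
            linear_combination h1 + h2
        | succ ℓ =>
            have h1 := hP (ℓ + 1) i
            simp only [prev] at h1
            simp [dE, prev]
            linear_combination h1 + h2
  · rintro ⟨ψ, rfl⟩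
    funext ℓ w
    cases w <;> cases ℓ <;> simp [dE, dO, prev] <;> ring

/-- For every `m ≥ 3`, `ker d_m = range d_{m−1}` in the Hochschild cochain complex of
the diagonal bimodule of the KLRW algebra (computed from the Chouhy–Solotar resolution);
consequently `HH^m(Δ) = 0` for all `m ≥ 3`. -/
theorem ker_d_eq_range_d (hn : 1 ≤ n) :
    ∀ (m : ℕ) (φ : C n k (m + 3)),
      d n k (m + 3) φ = (fun _ _ => (0 : k)) ↔ ∃ ψ : C n k (m + 2), d n k (m + 2) ψ = φ := by
  intro m φ
  show (if Even (m + 1 + 2) then dE n k else dO n k) φ = (fun _ _ => (0 : k)) ↔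
      ∃ ψ : ℕ → Shi n → k, (if Even (m + 2) then dE n k else dO n k) ψ = φ
  by_cases hm : Even m
  · rw [if_neg (by simp [Nat.even_add_one, hm]), if_pos (by simp [Nat.even_add_one, hm])]
    exact kerO_iff n k φ
  · rw [if_pos (by simp [Nat.even_add_one, hm]), if_neg (by simp [Nat.even_add_one, hm])]
    exact kerE_iff n k φ
end

section
/- For every basis element a_{j,i}s^α of A and every ℓ ∈ ℕ one has (a_{j,i}s^α)·s_i^ℓ = a_{j,i}s^{α+ℓ} = s_j^ℓ·(a_{j,i}s^α); consequently, for every ℓ ∈ ℕ the element z_ℓ := Σ_{i=0}^n s_i^ℓ of A is central: z_ℓ·x = x·z_ℓ for all x ∈ A. (These central elements realize the degree-0 A∞-natural transformations id ⇒ id, η⁰(T_i) = Σ_ℓ ε_ℓ s_i^ℓ, of the paper.) -/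
section Aux
open KLRW
variable (n : ℕ) (k : Type*) [Field k]

lemma aux_mul_zero (x : A n k) : mul n k x 0 = 0 := by
  simp [KLRW.mul]

lemma aux_zero_mul (x : A n k) : mul n k 0 x = 0 := by
  simp [KLRW.mul]

lemma aux_mul_add (x y z : A n k) :
    mul n k x (y + z) = mul n k x y + mul n k x z := by
  unfold KLRW.mul
  rw [← Finsupp.sum_add]
  congr 1; funext xb c
  apply Finsupp.sum_add_index'
  · intro a; simp
  · intro a b₁ b₂; rw [mul_add, add_smul]

lemma aux_add_mul (x y z : A n k) :
    mul n k (x + y) z = mul n k x z + mul n k y z := by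
  unfold KLRW.mul
  apply Finsupp.sum_add_index'
  · intro a; simp
  · intro a b₁ b₂
    rw [← Finsupp.sum_add]
    congr 1; funext yb d
    rw [add_mul, add_smul]

lemma aux_sum_mul {ι : Type*} (s : Finset ι) (f : ι → A n k) (y : A n k) :
    mul n k (∑ i ∈ s, f i) y = ∑ i ∈ s, mul n k (f i) y := by
  induction s using Finset.cons_induction with
  | empty => simp [aux_zero_mul]
  | cons a s ha ih => simp [Finset.sum_cons, aux_add_mul, ih]

lemma aux_mul_sum {ι : Type*} (s : Finset ι) (f : ι → A n k) (y : A n k) :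
    mul n k y (∑ i ∈ s, f i) = ∑ i ∈ s, mul n k y (f i) := by
  induction s using Finset.cons_induction with
  | empty => simp [aux_mul_zero]
  | cons a s ha ih => simp [Finset.sum_cons, aux_mul_add, ih]

lemma aux_single_single (a b : B n) (c d : k) :
    mul n k (Finsupp.single a c) (Finsupp.single b d) = (c * d) • mulB n k a b := by
  unfold KLRW.mul
  rw [Finsupp.sum_single_index (by simp), Finsupp.sum_single_index (by simp)]

end Aux

section Core
open KLRW
variable (n : ℕ) (k : Type*) [Field k]

lemma aux_right (j i : Fin (n + 1)) (α ℓ : ℕ) :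
    mul n k (bas n k j i α) (bas n k i i ℓ) = bas n k j i (α + ℓ) := by
  simp [KLRW.bas, aux_single_single, KLRW.mulB, KLRW.dd, dlt]

lemma aux_left (j i : Fin (n + 1)) (α ℓ : ℕ) :
    mul n k (bas n k j j ℓ) (bas n k j i α) = bas n k j i (α + ℓ) := by
  simp [KLRW.bas, aux_single_single, KLRW.mulB, KLRW.dd, dlt, add_comm]

lemma aux_z_single (ℓ : ℕ) (b : B n) (c : k) :
    mul n k (Finset.univ.sum fun i : Fin (n + 1) => bas n k i i ℓ) (Finsupp.single b c)
      = Finsupp.single (b.1, b.2.1, b.2.2 + ℓ) c ∧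
    mul n k (Finsupp.single b c) (Finset.univ.sum fun i : Fin (n + 1) => bas n k i i ℓ)
      = Finsupp.single (b.1, b.2.1, b.2.2 + ℓ) c := by
  obtain ⟨j, i, α⟩ := b
  constructor
  · rw [aux_sum_mul]
    rw [Finset.sum_eq_single_of_mem j (Finset.mem_univ j)]
    · simp [KLRW.bas, aux_single_single, KLRW.mulB, KLRW.dd, dlt, add_comm,
        Finsupp.smul_single]
    · intro m _ hm
      simp [KLRW.bas, aux_single_single, KLRW.mulB, hm]
  · rw [aux_mul_sum]
    rw [Finset.sum_eq_single_of_mem i (Finset.mem_univ i)]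
    · simp [KLRW.bas, aux_single_single, KLRW.mulB, KLRW.dd, dlt, Finsupp.smul_single]
    · intro m _ hm
      simp [KLRW.bas, aux_single_single, KLRW.mulB, hm.symm]

end Core

/-- `(a_{j,i}s^α)·s_i^ℓ = a_{j,i}s^{α+ℓ} = s_j^ℓ·(a_{j,i}s^α)` for every basis element and
every `ℓ`; consequently `z_ℓ := Σ_{i=0}^n s_i^ℓ` is central in the KLRW algebra.  (These
central elements realize the degree-0 A∞-natural transformations `id ⇒ id`,
`η⁰(T_i) = Σ_ℓ ε_ℓ s_i^ℓ`.) -/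
theorem klrw_dots_central (n : ℕ) (hn : 1 ≤ n) (k : Type*) [Field k] :
    (∀ (j i : Fin (n + 1)) (α ℓ : ℕ),
        KLRW.mul n k (KLRW.bas n k j i α) (KLRW.bas n k i i ℓ) = KLRW.bas n k j i (α + ℓ) ∧
        KLRW.mul n k (KLRW.bas n k j j ℓ) (KLRW.bas n k j i α) = KLRW.bas n k j i (α + ℓ)) ∧
    (∀ (ℓ : ℕ) (x : KLRW.A n k),
        KLRW.mul n k (Finset.univ.sum fun i : Fin (n + 1) => KLRW.bas n k i i ℓ) x
          = KLRW.mul n k x (Finset.univ.sum fun i : Fin (n + 1) => KLRW.bas n k i i ℓ)) := by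
  constructor
  · intro j i α ℓ
    exact ⟨aux_right n k j i α ℓ, aux_left n k j i α ℓ⟩
  · intro ℓ x
    induction x using Finsupp.induction with
    | zero => rw [aux_mul_zero, aux_zero_mul]
    | single_add b c f hb hc ih =>
      rw [aux_mul_add, aux_add_mul, ih, (aux_z_single n k ℓ b c).1,
        (aux_z_single n k ℓ b c).2]
end
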